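/- Let Q = B_∞ = {x ∈ ℝⁿ : ‖x‖_∞ ≤ 1} and ψ(x) = ½‖x‖². Then for every ε ≥ 0, P(ERᶜ(ε)) ≥ 1 − exp(−√(2/(πe))·n·ε), and for every ε with 0 ≤ ε ≤ √(πe/2)/(2n), P(ERᶜ(ε)) ≥ n·ε/√(2πe). -/

import Mathlib

open MeasureTheory Set Metric Pointwise RealInnerProductSpace

noncomputable section

/-- Standard Gaussian measure of a set in `ℝⁿ`. -/
def gauss {n : ℕ} (B : Set (EuclideanSpace ℝ (Fin n))) : ℝ :=
  ∫ x in B, (2 * Real.pi) ^ (-(n : ℝ) / 2) * Real.exp (-‖x‖ ^ 2 / 2)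

/-- Solution set of `P₀(g)`: minimize `-g·x` over `Q`. -/
def sol0 {n : ℕ} (Q : Set (EuclideanSpace ℝ (Fin n))) (g : EuclideanSpace ℝ (Fin n)) :
    Set (EuclideanSpace ℝ (Fin n)) :=
  {x ∈ Q | ∀ y ∈ Q, -⟪g, x⟫ ≤ -⟪g, y⟫}

/-- Solution set of `P_ε(g)`: minimize `-g·x + εψ(x)` over `Q` (here `dom ψ = ℝⁿ`). -/
def solReg {n : ℕ} (Q : Set (EuclideanSpace ℝ (Fin n))) (ψ : EuclideanSpace ℝ (Fin n) → ℝ)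
    (ε : ℝ) (g : EuclideanSpace ℝ (Fin n)) : Set (EuclideanSpace ℝ (Fin n)) :=
  {x ∈ Q | ∀ y ∈ Q, -⟪g, x⟫ + ε * ψ x ≤ -⟪g, y⟫ + ε * ψ y}

/-- The exact regularization event: `P₀(g)` has a unique solution which also solves `P_ε(g)`. -/
def ER {n : ℕ} (Q : Set (EuclideanSpace ℝ (Fin n))) (ψ : EuclideanSpace ℝ (Fin n) → ℝ)
    (ε : ℝ) : Set (EuclideanSpace ℝ (Fin n)) :=
  {g | ∃ z, sol0 Q g = {z} ∧ z ∈ solReg Q ψ ε g}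

/-- The unit `ℓ∞` ball in `ℝⁿ`. -/
def Binf (n : ℕ) : Set (EuclideanSpace ℝ (Fin n)) := {x | ∀ i, |x i| ≤ 1}

def gphi (t : ℝ) : ℝ := (2 * Real.pi) ^ (-(1:ℝ)/2) * Real.exp (-t ^ 2 / 2)

lemma two_pi_pos : (0:ℝ) < 2 * Real.pi := by positivity

lemma gphi_pos (t : ℝ) : 0 < gphi t := by
  unfold gphi; positivity

lemma gphi_integrable : Integrable gphi := by
  have h : Integrable (fun t : ℝ => Real.exp (-(1/2) * t ^ 2)) :=
    integrable_exp_neg_mul_sq (by norm_num)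
  have : gphi = fun t => (2 * Real.pi) ^ (-(1:ℝ)/2) * Real.exp (-(1/2) * t ^ 2) := by
    funext t; unfold gphi; ring_nf
  rw [this]
  exact h.const_mul _

lemma integral_gphi : ∫ t, gphi t = 1 := by
  unfold gphi
  rw [integral_const_mul]
  have h : (fun t : ℝ => Real.exp (-t ^ 2 / 2)) = fun t => Real.exp (-(1/2) * t ^ 2) := by
    funext t; ring_nf
  rw [h, integral_gaussian]
  have h2 : Real.sqrt (Real.pi / (1/2)) = Real.sqrt (2 * Real.pi) := by norm_num [mul_comm]
  rw [h2, Real.sqrt_eq_rpow, ← Real.rpow_add two_pi_pos]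
  norm_num

lemma density_eq {n : ℕ} (x : EuclideanSpace ℝ (Fin n)) :
    (2 * Real.pi) ^ (-(n : ℝ) / 2) * Real.exp (-‖x‖ ^ 2 / 2) = ∏ i, gphi (x i) := by
  have hnorm : ‖x‖ ^ 2 = ∑ i, (x i) ^ 2 := by
    rw [EuclideanSpace.norm_eq, Real.sq_sqrt (Finset.sum_nonneg fun i _ => sq_nonneg _)]
    simp [sq_abs]
  have hconst : (2 * Real.pi) ^ (-(n : ℝ) / 2) = ((2 * Real.pi) ^ (-(1:ℝ)/2)) ^ (n : ℕ) := by
    rw [← Real.rpow_natCast ((2 * Real.pi) ^ (-(1:ℝ)/2)) n, ← Real.rpow_mul two_pi_pos.le]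
    ring_nf
  have hexp : Real.exp (-‖x‖ ^ 2 / 2) = ∏ i, Real.exp (-(x i) ^ 2 / 2) := by
    rw [← Real.exp_sum, hnorm]
    congr 1
    rw [← Finset.sum_div, ← Finset.sum_neg_distrib]
  rw [hconst, hexp]
  simp only [gphi]
  rw [Finset.prod_mul_distrib, Finset.prod_const, Finset.card_univ, Fintype.card_fin]

lemma gauss_eq_pow {n : ℕ} (S : Set ℝ) (hS : MeasurableSet S) :
    gauss {x : EuclideanSpace ℝ (Fin n) | ∀ i, x i ∈ S} = (∫ t in S, gphi t) ^ n := by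
  unfold gauss
  set e := (MeasurableEquiv.toLp 2 (Fin n → ℝ)).symm with he
  have hBset : {x : EuclideanSpace ℝ (Fin n) | ∀ i, x i ∈ S}
      = e ⁻¹' (univ.pi fun _ => S) := by
    ext x
    simp [he, MeasurableEquiv.coe_toLp_symm, Set.mem_pi]
  have hmeas : MeasurableSet ((univ.pi fun _ : Fin n => S) : Set (Fin n → ℝ)) :=
    MeasurableSet.univ_pi fun _ => hS
  rw [hBset, setIntegral_congr_fun (hmeas.preimage e.measurable)
    (fun x _ => density_eq x)]
  have := (EuclideanSpace.volume_preserving_symm_measurableEquiv_toLp (Fin n)).setIntegral_preimage_emb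
    e.measurableEmbedding (fun y : Fin n → ℝ => ∏ i, gphi (y i)) (univ.pi fun _ => S)
  rw [show (fun x : EuclideanSpace ℝ (Fin n) => ∏ i, gphi (x i))
      = (fun x : EuclideanSpace ℝ (Fin n) => ∏ i, gphi ((e x) i)) from rfl]
  rw [this]
  have hind : ∀ y : Fin n → ℝ, (univ.pi fun _ : Fin n => S).indicator
      (fun y : Fin n → ℝ => ∏ i, gphi (y i)) y = ∏ i, S.indicator gphi (y i) := by
    intro y
    by_cases hy : y ∈ (univ.pi fun _ : Fin n => S)
    · rw [Set.indicator_of_mem hy]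
      exact (Finset.prod_congr rfl fun i _ =>
        (Set.indicator_of_mem (hy i (Set.mem_univ i)) gphi).symm)
    · rw [Set.indicator_of_notMem hy]
      obtain ⟨i, hi⟩ : ∃ i, y i ∉ S := by
        by_contra h
        push_neg at h
        exact hy fun i _ => h i
      exact (Finset.prod_eq_zero (Finset.mem_univ i)
        (Set.indicator_of_notMem hi gphi)).symm
  rw [← integral_indicator hmeas]
  rw [show ((univ.pi fun _ : Fin n => S).indicator fun y : Fin n → ℝ => ∏ i, gphi (y i))
      = fun y : Fin n → ℝ => ∏ i, S.indicator gphi (y i) from funext hind]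
  simp only [MeasureTheory.volume_pi]
  rw [MeasureTheory.integral_fintype_prod_eq_pow (S.indicator gphi),
    ← integral_indicator hS]
  simp

lemma density_integrable {n : ℕ} :
    Integrable (fun x : EuclideanSpace ℝ (Fin n) =>
      (2 * Real.pi) ^ (-(n : ℝ) / 2) * Real.exp (-‖x‖ ^ 2 / 2)) := by
  have hg : Integrable (fun y : Fin n → ℝ => ∏ i, gphi (y i)) :=
    Integrable.fintype_prod fun _ => gphi_integrable
  have h := ((EuclideanSpace.volume_preserving_symm_measurableEquiv_toLp (Fin n)).integrable_comp_emb
    (MeasurableEquiv.toLp 2 (Fin n → ℝ)).symm.measurableEmbedding).2 hg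
  have : ((fun y : Fin n → ℝ => ∏ i, gphi (y i)) ∘ (MeasurableEquiv.toLp 2 (Fin n → ℝ)).symm)
      = fun x : EuclideanSpace ℝ (Fin n) => (2 * Real.pi) ^ (-(n : ℝ) / 2)
        * Real.exp (-‖x‖ ^ 2 / 2) := by
    funext x
    exact (density_eq x).symm
  rwa [this] at h

lemma gauss_univ {n : ℕ} : gauss (univ : Set (EuclideanSpace ℝ (Fin n))) = 1 := by
  have h : (univ : Set (EuclideanSpace ℝ (Fin n))) = {x | ∀ i, x i ∈ (univ : Set ℝ)} := by
    ext x; simp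
  rw [h, gauss_eq_pow univ MeasurableSet.univ, Measure.restrict_univ, integral_gphi, one_pow]

lemma gauss_compl {n : ℕ} (B : Set (EuclideanSpace ℝ (Fin n))) (hB : MeasurableSet B) :
    gauss Bᶜ = 1 - gauss B := by
  have h := integral_add_compl hB (density_integrable (n := n))
  have : gauss B + gauss Bᶜ = gauss (univ : Set (EuclideanSpace ℝ (Fin n))) := by
    unfold gauss
    rw [Measure.restrict_univ]
    exact h
  rw [gauss_univ] at this
  linarith

def pp (ε : ℝ) : ℝ := ∫ t in Ioo (-ε) ε, gphi t
def qq (ε : ℝ) : ℝ := ∫ t in (Ioo (-ε) ε)ᶜ, gphi t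

lemma qq_eq (ε : ℝ) : qq ε = 1 - pp ε := by
  have h := integral_add_compl (measurableSet_Ioo (a := -ε) (b := ε)) gphi_integrable
  rw [integral_gphi] at h
  unfold qq pp
  linarith

lemma qq_nonneg (ε : ℝ) : 0 ≤ qq ε :=
  integral_nonneg fun t => (gphi_pos t).le

lemma pp_nonneg (ε : ℝ) : 0 ≤ pp ε :=
  integral_nonneg fun t => (gphi_pos t).le

lemma rpow_half_sq : ((2 * Real.pi) ^ (-(1:ℝ)/2)) ^ 2 = (2 * Real.pi)⁻¹ := by
  rw [← Real.rpow_natCast ((2 * Real.pi) ^ (-(1:ℝ)/2)) 2, ← Real.rpow_mul two_pi_pos.le]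
  norm_num [Real.rpow_neg_one]

lemma c_eq : Real.sqrt (2 / (Real.pi * Real.exp 1)) = 2 * gphi 1 := by
  have hsq : (2 * gphi 1) ^ 2 = 2 / (Real.pi * Real.exp 1) := by
    unfold gphi
    rw [mul_pow, mul_pow, rpow_half_sq, ← Real.exp_nat_mul]
    norm_num
    rw [Real.exp_neg]
    have h1 : Real.pi ≠ 0 := Real.pi_ne_zero
    have h2 : Real.exp 1 ≠ 0 := (Real.exp_pos 1).ne'
    field_simp
    ring
  rw [← hsq, Real.sqrt_sq (by nlinarith [gphi_pos 1])]

lemma pp_ge {ε : ℝ} (hε : 0 ≤ ε) (h1 : ε ≤ 1) : 2 * gphi 1 * ε ≤ pp ε := by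
  have hconst : ∫ _ in Ioo (-ε) ε, gphi 1 = 2 * gphi 1 * ε := by
    rw [setIntegral_const, Real.volume_real_Ioo_of_le (by linarith), smul_eq_mul]
    ring
  rw [← hconst]
  apply setIntegral_mono_on
  · exact integrableOn_const (by rw [Real.volume_Ioo]; exact ENNReal.ofReal_ne_top)
  · exact gphi_integrable.integrableOn
  · exact measurableSet_Ioo
  · intro t ht
    unfold gphi
    have h2 : t ^ 2 ≤ 1 := by nlinarith [ht.1, ht.2]
    have := Real.exp_le_exp.2 (show -1 ^ 2 / 2 ≤ -t ^ 2 / 2 by nlinarith)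
    exact mul_le_mul_of_nonneg_left (by norm_num at this ⊢; linarith) (by positivity)

lemma pp_mono {ε : ℝ} (h1 : 1 ≤ ε) : pp 1 ≤ pp ε := by
  apply setIntegral_mono_set gphi_integrable.integrableOn
    (Filter.Eventually.of_forall fun t => (gphi_pos t).le)
  exact HasSubset.Subset.eventuallyLE (Ioo_subset_Ioo (by linarith) h1)

lemma pp_one : 1 / 2 ≤ pp 1 := by
  have key : ∫ t in Ioo (-1 : ℝ) 1, (2 * Real.pi) ^ (-(1:ℝ)/2) * (1 - t ^ 2 / 2)
      = (2 * Real.pi) ^ (-(1:ℝ)/2) * (5 / 3) := by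
    rw [← integral_Ioc_eq_integral_Ioo,
      ← intervalIntegral.integral_of_le (by norm_num : (-1:ℝ) ≤ 1)]
    rw [intervalIntegral.integral_const_mul]
    congr 1
    have h1 : IntervalIntegrable (fun t : ℝ => t ^ 2 / 2) volume (-1) 1 :=
      (intervalIntegral.intervalIntegrable_pow 2).div_const 2
    rw [intervalIntegral.integral_sub intervalIntegrable_const h1,
      intervalIntegral.integral_div, integral_pow]
    simp
    norm_num
  have mono : ∫ t in Ioo (-1 : ℝ) 1, (2 * Real.pi) ^ (-(1:ℝ)/2) * (1 - t ^ 2 / 2) ≤ pp 1 := by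
    apply setIntegral_mono_on
    · have hc : Continuous fun t : ℝ => (2 * Real.pi) ^ (-(1:ℝ)/2) * (1 - t ^ 2 / 2) := by
        continuity
      exact (hc.integrableOn_Icc (a := -1) (b := 1)).mono_set Ioo_subset_Icc_self
    · exact gphi_integrable.integrableOn
    · exact measurableSet_Ioo
    · intro t _
      unfold gphi
      have := Real.add_one_le_exp (-t ^ 2 / 2)
      exact mul_le_mul_of_nonneg_left (by linarith) (by positivity)
  rw [key] at mono
  have hC : (10 : ℝ) / 3 * (2 * Real.pi) ^ (-(1:ℝ)/2) ≥ 1 := by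
    have h1 : (2 * Real.pi) ^ (-(1:ℝ)/2) = (Real.sqrt (2 * Real.pi))⁻¹ := by
      rw [Real.sqrt_eq_rpow, ← Real.rpow_neg_one, ← Real.rpow_mul two_pi_pos.le]
      norm_num
    have h2 : Real.sqrt (2 * Real.pi) ≤ 10 / 3 := by
      rw [show (10:ℝ)/3 = Real.sqrt ((10/3)^2) from (Real.sqrt_sq (by norm_num)).symm]
      apply Real.sqrt_le_sqrt
      nlinarith [Real.pi_lt_d2]
    have h3 : 0 < Real.sqrt (2 * Real.pi) := Real.sqrt_pos.2 two_pi_pos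
    rw [h1, ge_iff_le, ← div_le_iff₀ (by positivity), one_div, inv_inv]
    exact h2
  nlinarith [mono]

lemma integrable_mul_gphi : Integrable (fun t : ℝ => t * gphi t) := by
  have h : Integrable (fun t : ℝ => (2 * Real.pi) ^ (-(1:ℝ)/2) * (t * Real.exp (-(1/2) * t ^ 2))) :=
    (integrable_mul_exp_neg_mul_sq (by norm_num : (0:ℝ) < 1/2)).const_mul _
  have he : (fun t : ℝ => (2 * Real.pi) ^ (-(1:ℝ)/2) * (t * Real.exp (-(1/2) * t ^ 2)))
      = fun t : ℝ => t * gphi t := by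
    funext t; unfold gphi; ring_nf
  rwa [he] at h

lemma integral_Ioi_mul_gphi (ε : ℝ) : ∫ t in Ioi ε, t * gphi t = gphi ε := by
  have hderiv : ∀ x ∈ Ici ε, HasDerivAt (fun t : ℝ => -gphi t) (x * gphi x) x := by
    intro x _
    have h1 : HasDerivAt (fun t : ℝ => -t ^ 2 / 2) (-x) x := by
      have := ((hasDerivAt_pow 2 x).neg).div_const 2
      simpa using this.congr_deriv (by push_cast; ring)
    have h2 := (Real.hasDerivAt_exp (-x ^ 2 / 2)).comp x h1
    have h3 := ((h2.const_mul ((2 * Real.pi) ^ (-(1:ℝ)/2))).neg)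
    unfold gphi
    exact h3.congr_deriv (by ring)
  have hlim : Filter.Tendsto (fun t : ℝ => -gphi t) Filter.atTop (nhds 0) := by
    have h1 : Filter.Tendsto (fun t : ℝ => t ^ 2 / 2) Filter.atTop Filter.atTop :=
      (Filter.tendsto_pow_atTop (by norm_num)).atTop_div_const (by norm_num)
    have h2 := Real.tendsto_exp_neg_atTop_nhds_zero.comp h1
    have h3 := (h2.const_mul ((2 * Real.pi) ^ (-(1:ℝ)/2))).neg
    simp only [mul_zero, neg_zero] at h3
    have heq : (fun t : ℝ => -gphi t)
        = fun t : ℝ => -((2 * Real.pi) ^ (-(1:ℝ)/2)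
          * ((fun x => Real.exp (-x)) ∘ fun t : ℝ => t ^ 2 / 2) t) := by
      funext t
      unfold gphi
      simp only [Function.comp_apply, neg_div]
    rw [heq]
    exact h3
  have := integral_Ioi_of_hasDerivAt_of_tendsto' hderiv
    (integrable_mul_gphi.integrableOn) hlim
  simpa using this

lemma qq_le_tail {ε : ℝ} (hε : 1 ≤ ε) : qq ε ≤ 2 * gphi ε := by
  have hcompl : (Ioo (-ε) ε)ᶜ = Iic (-ε) ∪ Ici ε := by
    ext t
    simp only [mem_compl_iff, mem_Ioo, not_and_or, not_lt, mem_union, mem_Iic, mem_Ici]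
  have hdisj : Disjoint (Iic (-ε)) (Ici ε) := by
    rw [Set.disjoint_left]
    intro t ht1 ht2
    simp only [mem_Iic] at ht1
    simp only [mem_Ici] at ht2
    linarith
  unfold qq
  rw [hcompl, setIntegral_union hdisj measurableSet_Ici
    gphi_integrable.integrableOn gphi_integrable.integrableOn]
  have hsym : ∫ t in Iic (-ε), gphi t = ∫ t in Ici ε, gphi t := by
    have heven : ∀ t : ℝ, gphi (-t) = gphi t := by
      intro t; unfold gphi; ring_nf
    rw [← integral_comp_neg_Ioi ε gphi, integral_Ici_eq_integral_Ioi]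
    exact setIntegral_congr_fun measurableSet_Ioi fun t _ => (heven t)
  rw [hsym]
  have hbound : ∫ t in Ici ε, gphi t ≤ ∫ t in Ici ε, t * gphi t := by
    apply setIntegral_mono_on gphi_integrable.integrableOn
      integrable_mul_gphi.integrableOn measurableSet_Ici
    intro t ht
    simp only [mem_Ici] at ht
    nlinarith [gphi_pos t]
  have h2 : ∫ t in Ici ε, gphi t ≤ gphi ε := by
    simp only [integral_Ici_eq_integral_Ioi] at hbound ⊢
    rw [integral_Ioi_mul_gphi] at hbound
    exact hbound
  linarith

lemma inner_eq {n : ℕ} (g x : EuclideanSpace ℝ (Fin n)) : ⟪g, x⟫ = ∑ i, g i * x i := by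
  simp [PiLp.inner_apply, RCLike.inner_apply, mul_comm]

lemma norm_sq_eq {n : ℕ} (x : EuclideanSpace ℝ (Fin n)) : ‖x‖ ^ 2 = ∑ i, (x i) ^ 2 := by
  rw [EuclideanSpace.norm_eq, Real.sq_sqrt (Finset.sum_nonneg fun i _ => sq_nonneg _)]
  simp [sq_abs]


lemma sum_sub_single {n : ℕ} (F G : Fin n → ℝ) (i : Fin n)
    (h : ∀ j, j ≠ i → F j = G j) : ∑ j, F j - ∑ j, G j = F i - G i := by
  rw [← Finset.sum_sub_distrib]
  exact Finset.sum_eq_single_of_mem i (Finset.mem_univ i)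
    (fun j _ hj => by rw [h j hj]; ring)

lemma update_mem_Binf {n : ℕ} {z : EuclideanSpace ℝ (Fin n)} (hz : z ∈ Binf n)
    {a : ℝ} (ha : |a| ≤ 1) (i : Fin n) : WithLp.toLp 2 (Function.update z.ofLp i a) ∈ Binf n := by
  intro j
  show |Function.update z.ofLp i a j| ≤ 1
  by_cases hj : j = i
  · subst hj; rw [Function.update_self]; exact ha
  · rw [Function.update_of_ne hj]; exact hz j

lemma ER_eq {n : ℕ} {ε : ℝ} (hε : 0 < ε) :
    ER (Binf n) (fun x => ‖x‖ ^ 2 / 2) ε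
      = {g : EuclideanSpace ℝ (Fin n) | ∀ i, ε ≤ |g i|} := by
  ext g
  simp only [ER, mem_setOf_eq]
  constructor
  · rintro ⟨z, hz0, hzQ, hzreg⟩
    have hzmem : z ∈ sol0 (Binf n) g := by rw [hz0]; exact rfl
    obtain ⟨hzB, hzmin⟩ := hzmem
    -- g i ≠ 0 for all i
    have hg0 : ∀ i, g i ≠ 0 := by
      intro i hgi
      have key : ∀ a : ℝ, |a| ≤ 1 → WithLp.toLp 2 (Function.update z.ofLp i a) ∈ sol0 (Binf n) g := by
        intro a ha
        refine ⟨update_mem_Binf hzB ha i, fun y hy => ?_⟩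
        have heq : ⟪g, WithLp.toLp 2 (Function.update z.ofLp i a)⟫ = ⟪g, z⟫ := by
          rw [inner_eq, inner_eq]
          simp only [WithLp.ofLp_toLp]
          have hdiff := sum_sub_single (fun j => g j * Function.update z i a j)
            (fun j => g j * z j) i
            (fun j hj => by simp [Function.update_of_ne hj])
          simp only [Function.update_self, hgi, zero_mul] at hdiff
          linarith
        rw [heq]
        exact hzmin y hy
      have h1 : WithLp.toLp 2 (Function.update z.ofLp i 1) = z := by
        rw [hz0] at key
        exact key 1 (by norm_num)
      have h2 : WithLp.toLp 2 (Function.update z.ofLp i (-1)) = z := by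
        rw [hz0] at key
        exact key (-1) (by norm_num)
      have e1 : (1 : ℝ) = z i := by
        rw [← h1]; simp
      have e2 : (-1 : ℝ) = z i := by
        rw [← h2]; simp
      linarith [e1, e2]
    -- z i is the sign of g i
    have hsign : ∀ i, g i * z i = |g i| := by
      have wdef : ∀ j, g j * (if 0 ≤ g j then (1:ℝ) else -1) = |g j| := by
        intro j
        by_cases h : 0 ≤ g j
        · rw [if_pos h, abs_of_nonneg h, mul_one]
        · rw [if_neg h, abs_of_neg (lt_of_not_ge h)]; ring
      set w : EuclideanSpace ℝ (Fin n) := WithLp.toLp 2 (fun j => if 0 ≤ g j then (1:ℝ) else -1) with hw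
      have hwB : w ∈ Binf n := by
        intro j
        by_cases h : 0 ≤ g j <;> simp [hw, h]
      have hle := hzmin w hwB
      rw [inner_eq, inner_eq] at hle
      have hpt : ∀ j ∈ Finset.univ, g j * z j ≤ g j * w j := by
        intro j _
        rw [hw]
        calc g j * z j ≤ |g j * z j| := le_abs_self _
        _ = |g j| * |z j| := abs_mul _ _
        _ ≤ |g j| * 1 := by
            apply mul_le_mul_of_nonneg_left (hzB j) (abs_nonneg _)
        _ = g j * (if 0 ≤ g j then (1:ℝ) else -1) := by rw [mul_one, wdef]
      have hsum : ∑ j, g j * z j = ∑ j, g j * w j := by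
        have := Finset.sum_le_sum hpt
        linarith [neg_le_neg this]
      have := (Finset.sum_eq_sum_iff_of_le hpt).1 hsum
      intro i
      have hi := this i (Finset.mem_univ i)
      rw [hi]
      exact wdef i
    intro i
    by_contra hcon
    push_neg at hcon
    -- compare z with update z i (g i / ε) in regularized problem
    have habs : |g i / ε| ≤ 1 := by
      rw [abs_div, abs_of_pos hε]
      exact le_of_lt (div_lt_one hε |>.2 hcon)
    set y : EuclideanSpace ℝ (Fin n) := WithLp.toLp 2 (Function.update z.ofLp i (g i / ε)) with hy
    have hyB : y ∈ Binf n := update_mem_Binf hzB habs i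
    have hreg : -⟪g, z⟫ + ε * (‖z‖ ^ 2 / 2) ≤ -⟪g, y⟫ + ε * (‖y‖ ^ 2 / 2) :=
      hzreg y hyB
    have hz2 : z i ^ 2 = 1 := by
      have := hsign i
      have hgz : z i = 1 ∨ z i = -1 := by
        rcases lt_or_gt_of_ne (hg0 i) with h | h
        · right
          have : g i * z i = -g i := by rw [hsign i, abs_of_neg h]
          field_simp at this
          nlinarith [this]
        · left
          have : g i * z i = g i := by rw [hsign i, abs_of_pos h]
          nlinarith [this]
      rcases hgz with h | h <;> rw [h] <;> norm_num
    have hinner : ⟪g, z⟫ - ⟪g, y⟫ = g i * z i - g i * (g i / ε) := by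
      rw [inner_eq, inner_eq]
      exact sum_sub_single _ _ i (fun j hj => by rw [hy]; simp [Function.update_of_ne hj])
        |>.trans (by rw [hy]; simp)
    have hnormdiff : ‖z‖ ^ 2 - ‖y‖ ^ 2 = z i ^ 2 - (g i / ε) ^ 2 := by
      rw [norm_sq_eq, norm_sq_eq]
      exact sum_sub_single _ _ i (fun j hj => by rw [hy]; simp [Function.update_of_ne hj])
        |>.trans (by rw [hy]; simp)
    have key : -(g i * z i) + ε * z i ^ 2 / 2 ≤ -(g i * (g i / ε)) + ε * (g i / ε) ^ 2 / 2 := by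
      nlinarith [hreg, hinner, hnormdiff]
    rw [hsign i, hz2] at key
    have hfinal : (|g i| - ε) ^ 2 ≤ 0 := by
      have hgsq : g i * (g i / ε) = |g i| ^ 2 / ε := by
        rw [sq_abs]; field_simp
      have h2 : (g i / ε) ^ 2 = |g i| ^ 2 / ε ^ 2 := by
        rw [div_pow, sq_abs]
      rw [hgsq, h2] at key
      have key2 := mul_le_mul_of_nonneg_left key (by positivity : (0:ℝ) ≤ 2 * ε)
      have e5 : 2 * ε * (-(|g i| ^ 2 / ε) + ε * (|g i| ^ 2 / ε ^ 2) / 2) = -|g i| ^ 2 := by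
        field_simp; ring
      rw [e5] at key2
      nlinarith [key2]
    nlinarith [hfinal, abs_nonneg (g i)]
  · intro hg
    set z : EuclideanSpace ℝ (Fin n) := WithLp.toLp 2 (fun j => if 0 ≤ g j then (1:ℝ) else -1) with hz
    have wdef : ∀ j, g j * z j = |g j| := by
      intro j
      by_cases h : 0 ≤ g j
      · simp only [hz, WithLp.ofLp_toLp, if_pos h]; rw [abs_of_nonneg h, mul_one]
      · simp only [hz, WithLp.ofLp_toLp, if_neg h]; rw [abs_of_neg (lt_of_not_ge h)]; ring
    have hzB : z ∈ Binf n := by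
      intro j
      by_cases h : 0 ≤ g j <;> simp [hz, h]
    have hpt : ∀ (x : EuclideanSpace ℝ (Fin n)), x ∈ Binf n →
        ∀ j, g j * x j ≤ g j * z j := by
      intro x hx j
      calc g j * x j ≤ |g j * x j| := le_abs_self _
      _ = |g j| * |x j| := abs_mul _ _
      _ ≤ |g j| * 1 := mul_le_mul_of_nonneg_left (hx j) (abs_nonneg _)
      _ = g j * z j := by rw [mul_one, wdef]
    have hzmin : ∀ y ∈ Binf n, -⟪g, z⟫ ≤ -⟪g, y⟫ := by
      intro y hy
      rw [inner_eq, inner_eq]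
      have := Finset.sum_le_sum (fun j (_ : j ∈ Finset.univ) => hpt y hy j)
      linarith
    refine ⟨z, ?_, ⟨hzB, ?_⟩⟩
    · ext x
      simp only [sol0, mem_setOf_eq, mem_singleton_iff]
      constructor
      · rintro ⟨hxB, hxmin⟩
        have hle := hxmin z hzB
        rw [inner_eq, inner_eq] at hle
        have hptx : ∀ j ∈ Finset.univ, g j * x j ≤ g j * z j :=
          fun j _ => hpt x hxB j
        have hsum : ∑ j, g j * x j = ∑ j, g j * z j := by
          have := Finset.sum_le_sum hptx
          linarith
        have heach := (Finset.sum_eq_sum_iff_of_le hptx).1 hsum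
        ext j
        have hgj : g j ≠ 0 := by
          intro h0
          have := hg j
          rw [h0] at this
          simp at this
          linarith
        exact mul_left_cancel₀ hgj (heach j (Finset.mem_univ j))
      · rintro rfl
        exact ⟨hzB, hzmin⟩
    · intro y hy
      simp only [inner_eq, norm_sq_eq]
      have hterm : ∀ j ∈ Finset.univ,
          -(g j * z j) + ε * z j ^ 2 / 2 ≤ -(g j * y j) + ε * y j ^ 2 / 2 := by
        intro j _
        have h1 : z j ^ 2 = 1 := by
          by_cases h : 0 ≤ g j <;> simp [hz, h]
        have h2 : |y j| ≤ 1 := hy j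
        have h3 : ε ≤ |g j| := hg j
        rw [h1, wdef]
        have hy1 : -1 ≤ y j := neg_le_of_abs_le h2
        have hy2 : y j ≤ 1 := le_of_abs_le h2
        have : g j * y j ≤ |g j| * |y j| := by
          calc g j * y j ≤ |g j * y j| := le_abs_self _
          _ = |g j| * |y j| := abs_mul _ _
        have h4 : y j ^ 2 ≤ 1 := by nlinarith [hy1, hy2]
        nlinarith [this, sq_abs (y j), abs_nonneg (y j),
          mul_nonneg (sub_nonneg.2 h3) (sub_nonneg.2 h2),
          mul_nonneg hε.le (sq_nonneg (1 - |y j|))]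
      have hsum := Finset.sum_le_sum hterm
      rw [Finset.sum_add_distrib, Finset.sum_add_distrib] at hsum
      have e1 : ∑ j, -(g j * z j) = -∑ j, g j * z j := by rw [Finset.sum_neg_distrib]
      have e2 : ∑ j, -(g j * y j) = -∑ j, g j * y j := by rw [Finset.sum_neg_distrib]
      have e3 : ∑ j, ε * z j ^ 2 / 2 = ε * (∑ j, z j ^ 2) / 2 := by
        rw [Finset.mul_sum, Finset.sum_div]
      have e4 : ∑ j, ε * y j ^ 2 / 2 = ε * (∑ j, y j ^ 2) / 2 := by
        rw [Finset.mul_sum, Finset.sum_div]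
      rw [e1, e2, e3, e4] at hsum
      linarith

lemma half_le_one_sub_exp {s : ℝ} (hs0 : 0 ≤ s) (hs : s ≤ 1) :
    s / 2 ≤ 1 - Real.exp (-s) := by
  have hmul : Real.exp (-s) * Real.exp s = 1 := by
    rw [← Real.exp_add]; simp
  have h1 : Real.exp (-s) * (s + 1) ≤ 1 := by
    have h2 := mul_le_mul_of_nonneg_left (Real.add_one_le_exp s)
      (Real.exp_pos (-s)).le
    rw [hmul] at h2
    exact h2
  nlinarith [h1, hs0, hs, Real.exp_pos (-s)]

/-- Lower bounds on the failure probability of exact regularization for the `ℓ∞` ball with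
quadratic regularization. -/
theorem stmt16 {n : ℕ} (ε : ℝ) (hε : 0 ≤ ε) :
    1 - Real.exp (-(Real.sqrt (2 / (Real.pi * Real.exp 1)) * n * ε)) ≤
      gauss (ER (Binf n) (fun x => ‖x‖ ^ 2 / 2) ε)ᶜ ∧
    (ε ≤ Real.sqrt (Real.pi * Real.exp 1 / 2) / (2 * n) →
      n * ε / Real.sqrt (2 * Real.pi * Real.exp 1) ≤
        gauss (ER (Binf n) (fun x => ‖x‖ ^ 2 / 2) ε)ᶜ) := by
  set c := Real.sqrt (2 / (Real.pi * Real.exp 1)) with hc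
  have hgauss_nonneg : (0:ℝ) ≤ gauss (ER (Binf n) (fun x => ‖x‖ ^ 2 / 2) ε)ᶜ :=
    integral_nonneg fun x => by positivity
  have hepos : 0 < Real.exp 1 := Real.exp_pos 1
  have hppos : 0 < Real.pi := Real.pi_pos
  have hc0 : 0 ≤ c := Real.sqrt_nonneg _
  have hcsq : c ^ 2 = 2 / (Real.pi * Real.exp 1) := by
    rw [hc, Real.sq_sqrt (by positivity)]
  have hpe8 : (8:ℝ) ≤ Real.pi * Real.exp 1 := by
    nlinarith [Real.pi_gt_d6, Real.exp_one_gt_d9]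
  have hchalf : c ≤ 1/2 := by
    have h24 : c ^ 2 ≤ 1/4 := by
      rw [hcsq, div_le_iff₀ (by positivity)]
      linarith
    nlinarith [h24, hc0]
  -- trivial cases
  by_cases htriv : n = 0 ∨ ε = 0
  · constructor
    · rcases htriv with h | h <;> subst h <;> simpa using hgauss_nonneg
    · intro _
      rcases htriv with h | h <;> subst h <;> simpa using hgauss_nonneg
  push_neg at htriv
  obtain ⟨hn0, hε0⟩ := htriv
  have hεpos : 0 < ε := lt_of_le_of_ne hε (Ne.symm hε0)
  have hn1 : 1 ≤ n := Nat.one_le_iff_ne_zero.2 hn0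
  -- identify the gauss measure of the complement
  have hA : {g : EuclideanSpace ℝ (Fin n) | ∀ i, ε ≤ |g i|}
      = {x : EuclideanSpace ℝ (Fin n) | ∀ i, x i ∈ (Ioo (-ε) ε)ᶜ} := by
    ext x
    simp only [mem_setOf_eq, mem_compl_iff, mem_Ioo, not_and_or, not_lt, le_abs]
    refine forall_congr' fun i => ?_
    constructor
    · rintro (h | h)
      · right; exact h
      · left; linarith
    · rintro (h | h)
      · right; linarith
      · left; exact h
  have hAm : MeasurableSet {x : EuclideanSpace ℝ (Fin n) | ∀ i, x i ∈ (Ioo (-ε) ε)ᶜ} := by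
    have heq : {x : EuclideanSpace ℝ (Fin n) | ∀ i, x i ∈ (Ioo (-ε) ε)ᶜ}
        = (MeasurableEquiv.toLp 2 (Fin n → ℝ)).symm ⁻¹' (univ.pi fun _ => (Ioo (-ε) ε)ᶜ) := by
      ext x; simp [MeasurableEquiv.coe_toLp_symm, Set.mem_pi]
    rw [heq]
    exact (MeasurableSet.univ_pi fun _ => measurableSet_Ioo.compl).preimage
      (MeasurableEquiv.toLp 2 (Fin n → ℝ)).symm.measurable
  have hgauss : gauss (ER (Binf n) (fun x => ‖x‖ ^ 2 / 2) ε)ᶜ = 1 - qq ε ^ n := by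
    rw [ER_eq hεpos, hA, gauss_compl _ hAm,
      gauss_eq_pow ((Ioo (-ε) ε)ᶜ) measurableSet_Ioo.compl]
    rfl
  have hq0 : 0 ≤ qq ε := qq_nonneg ε
  -- the key tail bound
  have hqle : qq ε ≤ Real.exp (-(c * ε)) := by
    rcases le_or_gt ε 1 with h1 | h1
    · have hp := pp_ge hε h1
      rw [← c_eq, ← hc] at hp
      have := Real.add_one_le_exp (-(c * ε))
      have hqq := qq_eq ε
      nlinarith [hp, this, hqq]
    · have htail := qq_le_tail h1.le
      have h2C : 2 * (2 * Real.pi) ^ (-(1:ℝ)/2) ≤ 1 := by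
        have hs : (2:ℝ) ≤ Real.sqrt (2 * Real.pi) := by
          nlinarith [Real.sq_sqrt two_pi_pos.le, Real.sqrt_nonneg (2 * Real.pi),
            Real.pi_gt_d6]
        have hrw : (2 * Real.pi) ^ (-(1:ℝ)/2) = (Real.sqrt (2 * Real.pi))⁻¹ := by
          rw [Real.sqrt_eq_rpow, ← Real.rpow_neg_one, ← Real.rpow_mul two_pi_pos.le]
          norm_num
        rw [hrw]
        rw [mul_inv_le_iff₀ (by nlinarith)]
        linarith
      have hg2 : 2 * gphi ε ≤ Real.exp (-ε ^ 2 / 2) := by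
        unfold gphi
        nlinarith [Real.exp_pos (-ε ^ 2 / 2), h2C]
      have hexp : Real.exp (-ε ^ 2 / 2) ≤ Real.exp (-(c * ε)) := by
        apply Real.exp_le_exp.2
        nlinarith [hchalf, hc0]
      linarith
  constructor
  · -- part 1
    rw [hgauss]
    have hpow : qq ε ^ n ≤ Real.exp (-(c * ε)) ^ n := pow_le_pow_left₀ hq0 hqle n
    have hexp : Real.exp (-(c * ε)) ^ n = Real.exp (-(c * n * ε)) := by
      rw [← Real.exp_nat_mul]
      congr 1
      ring
    rw [hexp] at hpow
    linarith
  · -- part 2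
    intro hεM
    rw [hgauss]
    set M := Real.sqrt (Real.pi * Real.exp 1 / 2) with hM
    have hM0 : 0 < M := Real.sqrt_pos.2 (by positivity)
    have hcM : c * M = 1 := by
      rw [hc, hM, ← Real.sqrt_mul (by positivity)]
      rw [show 2 / (Real.pi * Real.exp 1) * (Real.pi * Real.exp 1 / 2) = 1 by
        field_simp]
      exact Real.sqrt_one
    have hnε : (n : ℝ) * ε ≤ M / 2 := by
      have hn : (1:ℝ) ≤ (n:ℝ) := by exact_mod_cast hn1
      have := mul_le_mul_of_nonneg_left hεM (by positivity : (0:ℝ) ≤ (n:ℝ))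
      calc (n:ℝ) * ε ≤ (n:ℝ) * (M / (2 * n)) := this
      _ = M / 2 := by field_simp
    have hcε : c * ε ≤ 1 / 2 := by
      have hε_le : ε ≤ M / 2 := by
        calc ε = 1 * ε := (one_mul ε).symm
        _ ≤ (n:ℝ) * ε := by
            apply mul_le_mul_of_nonneg_right _ hε
            exact_mod_cast hn1
        _ ≤ M / 2 := hnε
      calc c * ε ≤ c * (M / 2) := mul_le_mul_of_nonneg_left hε_le hc0
      _ = 1 / 2 := by rw [← hcM]; ring
    have hs : c * n * ε ≤ 1 / 2 := by
      calc c * n * ε = c * ((n:ℝ) * ε) := by ring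
      _ ≤ c * (M / 2) := mul_le_mul_of_nonneg_left hnε hc0
      _ = 1 / 2 := by rw [← hcM]; ring
    have hs0 : 0 ≤ c * n * ε := by positivity
    -- p ≥ c ε
    have hp : c * ε ≤ pp ε := by
      rcases le_or_gt ε 1 with h1 | h1
      · have := pp_ge hε h1
        rw [← c_eq, ← hc] at this
        linarith
      · calc c * ε ≤ 1 / 2 := hcε
        _ ≤ pp 1 := pp_one
        _ ≤ pp ε := pp_mono h1.le
    have hq_le : qq ε ≤ 1 - c * ε := by rw [qq_eq]; linarith
    have h1cε : 0 ≤ 1 - c * ε := by linarith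
    have hpow : qq ε ^ n ≤ Real.exp (-(c * n * ε)) := by
      calc qq ε ^ n ≤ (1 - c * ε) ^ n := pow_le_pow_left₀ hq0 hq_le n
      _ ≤ Real.exp (-(c * ε)) ^ n := by
          apply pow_le_pow_left₀ h1cε
          linarith [Real.add_one_le_exp (-(c * ε))]
      _ = Real.exp (-(c * n * ε)) := by
          rw [← Real.exp_nat_mul]; congr 1; ring
    -- 1 - exp(-s) ≥ s / 2 for s ≤ 1/2
    have hkey : c * n * ε / 2 ≤ 1 - Real.exp (-(c * n * ε)) :=
      half_le_one_sub_exp hs0 (by linarith)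
    -- identify the constant
    have hc2 : c * Real.sqrt (2 * Real.pi * Real.exp 1) = 2 := by
      rw [hc, ← Real.sqrt_mul (by positivity)]
      rw [show 2 / (Real.pi * Real.exp 1) * (2 * Real.pi * Real.exp 1) = 4 by
        field_simp; ring]
      rw [show (4:ℝ) = 2 ^ 2 by norm_num, Real.sqrt_sq (by norm_num)]
    have hsq2 : 0 < Real.sqrt (2 * Real.pi * Real.exp 1) := Real.sqrt_pos.2 (by positivity)
    have hfinal : (n:ℝ) * ε / Real.sqrt (2 * Real.pi * Real.exp 1) = c * n * ε / 2 := by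
      rw [div_eq_div_iff hsq2.ne' (by norm_num : (2:ℝ) ≠ 0)]
      calc (n:ℝ) * ε * 2 = (n:ℝ) * ε * (c * Real.sqrt (2 * Real.pi * Real.exp 1)) := by
            rw [hc2]
      _ = c * ↑n * ε * Real.sqrt (2 * Real.pi * Real.exp 1) := by ring
    rw [hfinal]
    linarith [hkey, hpow]
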